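/- arXiv:2603.27398 — 7 statements merged into one kernel-verified Lean document; each statement's English description precedes it below -/
import Mathlib

section
/- Let q be a prime, and let T⁺ and T⁻ be disjoint finite multisets of elements of 𝔽_q with |T⁺| + |T⁻| < q, such that |T⁺| ≡ |T⁻| (mod q) and for every j with 1 ≤ j ≤ k−1 the j-th power sums agree: ∑_{a∈T⁺} a^j = ∑_{a∈T⁻} a^j in 𝔽_q. If |T⁺| + |T⁻| < 2k, then both multisets are empty. -/
open MvPolynomial Polynomial

lemma multiset_newton {R : Type*} [CommRing R] (s : Multiset R) (j : ℕ) :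
    (j : R) * s.esymm j = (-1) ^ (j + 1) *
      ∑ a ∈ (Finset.HasAntidiagonal.antidiagonal j).filter (fun a => a.1 < j),
        (-1) ^ a.1 * s.esymm a.1 * (s.map (fun x => x ^ a.2)).sum := by
  induction s using Quot.inductionOn with
  | h l =>
    have key := congrArg (MvPolynomial.aeval l.get) (MvPolynomial.mul_esymm_eq_sum (Fin l.length) R j)
    have huniv : (Finset.univ.val.map l.get) = (l : Multiset R) := by
      rw [Fin.univ_def]
      show ((List.finRange l.length : Multiset (Fin l.length)).map l.get) = _
      rw [Multiset.map_coe, List.map_get_finRange]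
    have hps : ∀ n : ℕ, MvPolynomial.aeval l.get (psum (Fin l.length) R n)
        = ((l : Multiset R).map (fun x => x ^ n)).sum := by
      intro n
      rw [psum, map_sum, Multiset.map_coe, Multiset.sum_coe,
        ← List.ofFn_getElem_eq_map l (fun x => x ^ n), List.sum_ofFn]
      simp
    simp only [map_mul, map_natCast, map_pow, map_neg, map_one, map_sum,
      aeval_esymm_eq_multiset_esymm, huniv, hps] at key
    exact key

theorem stmt_0 (q k : ℕ) (hq : q.Prime) (hk : 0 < k) (hkq : 2 * k ≤ q)
    (T₁ T₂ : Multiset (ZMod q))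
    (hdisj : Disjoint T₁ T₂)
    (hcard : Multiset.card T₁ + Multiset.card T₂ < q)
    (hmod : Multiset.card T₁ ≡ Multiset.card T₂ [MOD q])
    (hpow : ∀ j : ℕ, 1 ≤ j → j ≤ k - 1 →
      (T₁.map (fun a => a ^ j)).sum = (T₂.map (fun a => a ^ j)).sum)
    (hlt : Multiset.card T₁ + Multiset.card T₂ < 2 * k) :
    T₁ = 0 ∧ T₂ = 0 := by
  have hfact := Fact.mk hq
  -- cardinalities are equal
  have hc1 : Multiset.card T₁ < q := lt_of_le_of_lt (Nat.le_add_right _ _) hcard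
  have hc2 : Multiset.card T₂ < q := lt_of_le_of_lt (Nat.le_add_left _ _) hcard
  have hcc : Multiset.card T₁ = Multiset.card T₂ := by
    have := hmod
    unfold Nat.ModEq at this
    rwa [Nat.mod_eq_of_lt hc1, Nat.mod_eq_of_lt hc2] at this
  set m := Multiset.card T₁ with hm
  have hmk : m ≤ k - 1 := by
    omega
  -- elementary symmetric functions agree
  have hesymm : ∀ j : ℕ, j ≤ k - 1 → T₁.esymm j = T₂.esymm j := by
    intro j
    induction j using Nat.strong_induction_on with
    | _ j ih =>
      intro hj
      rcases Nat.eq_zero_or_pos j with rfl | hj0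
      · simp [Multiset.esymm, Multiset.powersetCard_zero_left]
      · have hjq : (j : ZMod q) ≠ 0 := by
          rw [Ne, ZMod.natCast_eq_zero_iff]
          intro hdvd
          have := Nat.le_of_dvd hj0 hdvd
          omega
        have h1 := multiset_newton T₁ j
        have h2 := multiset_newton T₂ j
        have hsum : ∑ a ∈ (Finset.HasAntidiagonal.antidiagonal j).filter (fun a => a.1 < j),
              (-1 : ZMod q) ^ a.1 * T₁.esymm a.1 * (T₁.map (fun x => x ^ a.2)).sum
            = ∑ a ∈ (Finset.HasAntidiagonal.antidiagonal j).filter (fun a => a.1 < j),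
              (-1 : ZMod q) ^ a.1 * T₂.esymm a.1 * (T₂.map (fun x => x ^ a.2)).sum := by
          apply Finset.sum_congr rfl
          intro a ha
          simp only [Finset.mem_filter, Finset.mem_antidiagonal] at ha
          obtain ⟨hadd, hlt'⟩ := ha
          have hadd' := Finset.HasAntidiagonal.mem_antidiagonal.mp hadd
          rw [ih a.1 hlt' (by omega), hpow a.2 (by omega) (by omega)]
        apply mul_left_cancel₀ hjq
        rw [h1, h2, hsum]
  -- the polynomials ∏ (X - a) agree
  have hpoly : (T₁.map fun a => Polynomial.X - Polynomial.C a).prod = (T₂.map fun a => Polynomial.X - Polynomial.C a).prod := by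
    ext n
    rcases le_or_gt n m with hn | hn
    · rw [Multiset.prod_X_sub_C_coeff T₁ (hm ▸ hn), Multiset.prod_X_sub_C_coeff T₂ (hcc ▸ hm ▸ hn),
        ← hm, ← hcc, hesymm (m - n) (by omega)]
    · rw [Polynomial.coeff_eq_zero_of_natDegree_lt, Polynomial.coeff_eq_zero_of_natDegree_lt]
      · rw [Polynomial.natDegree_multiset_prod_X_sub_C_eq_card]; omega
      · rw [Polynomial.natDegree_multiset_prod_X_sub_C_eq_card]; omega
  -- hence the multisets agree
  have heq : T₁ = T₂ := by
    have := congrArg Polynomial.roots hpoly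
    rwa [Polynomial.roots_multiset_prod_X_sub_C, Polynomial.roots_multiset_prod_X_sub_C] at this
  have h0 : T₁ = 0 := by
    apply Multiset.eq_zero_of_forall_notMem
    intro a ha
    exact Multiset.disjoint_left.mp hdisj ha (heq ▸ ha)
  exact ⟨h0, heq ▸ h0⟩
end

section
/- Let q be a prime and 1 < k ≤ q/2. Define the Reed–Solomon lattice L_{q,k} = { v ∈ ℤ^q : for all 0 ≤ j ≤ k−1, ∑_{i=1}^q v_i a_i^j ≡ 0 (mod q) }, where a_1,…,a_q is an enumeration of 𝔽_q. Then for every nonzero v ∈ L_{q,k}, the ℓ₁-norm satisfies ‖v‖₁ ≥ 2k. -/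
open Polynomial Finset in
lemma derivative_finset_prod_aux {R : Type*} [CommRing R] {ι : Type*} [DecidableEq ι]
    (s : Finset ι) (f : ι → R[X]) :
    derivative (∏ i ∈ s, f i) = ∑ i ∈ s, (∏ j ∈ s.erase i, f j) * derivative (f i) := by
  induction s using Finset.induction_on with
  | empty => simp
  | @insert x s hx ih =>
    rw [Finset.prod_insert hx, derivative_mul, ih, Finset.sum_insert hx,
      Finset.erase_insert hx, Finset.mul_sum]
    congr 1
    · ring
    refine Finset.sum_congr rfl fun i hi => ?_
    rw [Finset.erase_insert_of_ne (by rintro rfl; exact hx hi),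
      Finset.prod_insert (fun h => hx (Finset.mem_of_mem_erase h))]
    ring

open Polynomial Finset in
lemma divByMonic_eq_of_aux {F : Type*} [Field F] {c : F} {u w : F[X]}
    (huw : (X - C c) * u = w) : w /ₘ (X - C c) = u := by
  have hroot : w.IsRoot c := by
    rw [← huw]; simp [Polynomial.IsRoot.def]
  have h2 := (Polynomial.mul_divByMonic_eq_iff_isRoot (a := c) (p := w)).mpr hroot
  exact mul_left_cancel₀ (Polynomial.X_sub_C_ne_zero c) (h2.trans huw.symm)

open Polynomial Finset in
lemma RS_wronskian_aux {F : Type*} [Field F] {ι : Type*} [Fintype ι] [DecidableEq ι]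
    (a : ι → F) (p n : ι → ℕ) (hpn : ∀ i, p i = 0 ∨ n i = 0) :
    derivative (∏ i, (X - C (a i)) ^ p i) * (∏ i, (X - C (a i)) ^ n i)
      - (∏ i, (X - C (a i)) ^ p i) * derivative (∏ i, (X - C (a i)) ^ n i)
    = ∑ i, C ((p i : F) - (n i : F)) *
        ((∏ j, (X - C (a j)) ^ (p j + n j)) /ₘ (X - C (a i))) := by
  rw [derivative_finset_prod_aux, derivative_finset_prod_aux, Finset.sum_mul, Finset.mul_sum,
    ← Finset.sum_sub_distrib]
  refine Finset.sum_congr rfl fun i _ => ?_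
  rw [derivative_X_sub_C_pow, derivative_X_sub_C_pow]
  rcases Nat.eq_zero_or_pos (p i + n i) with hz | hpos
  · have h1 : p i = 0 := by omega
    have h2 : n i = 0 := by omega
    simp [h1, h2]
  have hquot : (∏ j, (X - C (a j)) ^ (p j + n j)) /ₘ (X - C (a i))
      = (X - C (a i)) ^ (p i + n i - 1) * ∏ j ∈ Finset.univ.erase i, (X - C (a j)) ^ (p j + n j) := by
    apply divByMonic_eq_of_aux
    rw [← mul_assoc, ← pow_succ']
    rw [show (p i + n i - 1) + 1 = p i + n i from by omega]
    exact Finset.mul_prod_erase Finset.univ (fun j => (X - C (a j)) ^ (p j + n j)) (Finset.mem_univ i)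
  rw [hquot]
  rcases hpn i with h0 | h0
  · -- p i = 0
    rw [← Finset.mul_prod_erase Finset.univ (fun j => (X - C (a j)) ^ p j) (Finset.mem_univ i)]
    simp only [h0, pow_zero, one_mul, Nat.cast_zero, map_zero, zero_mul, zero_add, zero_sub,
      map_neg]
    simp only [pow_add, Finset.prod_mul_distrib]
    ring
  · -- n i = 0
    rw [← Finset.mul_prod_erase Finset.univ (fun j => (X - C (a j)) ^ n j) (Finset.mem_univ i)]
    simp only [h0, pow_zero, one_mul, Nat.cast_zero, map_zero, zero_mul, mul_zero, add_zero,
      sub_zero]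
    simp only [pow_add, Finset.prod_mul_distrib]
    ring


theorem stmt_1 (q k : ℕ) (hq : q.Prime) (hk : 1 < k) (hkq : 2 * k ≤ q)
    (a : Fin q → ZMod q) (ha : Function.Bijective a)
    (v : Fin q → ℤ) (hv : v ≠ 0)
    (hmem : ∀ j : ℕ, j ≤ k - 1 → ∑ i, (v i : ZMod q) * a i ^ j = 0) :
    2 * k ≤ ∑ i, |v i| := by
  haveI : Fact q.Prime := ⟨hq⟩
  by_contra hcon
  push_neg at hcon
  open Polynomial Finset in
  · set p : Fin q → ℕ := fun i => (v i).toNat with hp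
    set n : Fin q → ℕ := fun i => (-(v i)).toNat with hn
    have habs : ∀ i, |v i| = (p i : ℤ) + n i := fun i => by
      simp only [hp, hn]; rw [Int.abs_eq_natAbs]; omega
    have hvi : ∀ i, (v i) = (p i : ℤ) - n i := fun i => by simp only [hp, hn]; omega
    set P := ∑ i, p i with hP
    set N := ∑ i, n i with hN
    have hsum_abs : ∑ i, |v i| = (P : ℤ) + N := by
      rw [hP, hN]; push_cast; rw [← Finset.sum_add_distrib]
      exact Finset.sum_congr rfl fun i _ => habs i
    have hsum_v : ∑ i, v i = (P : ℤ) - N := by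
      rw [hP, hN]; push_cast; rw [← Finset.sum_sub_distrib]
      exact Finset.sum_congr rfl fun i _ => hvi i
    have h0 : ((∑ i, v i : ℤ) : ZMod q) = 0 := by
      have h := hmem 0 (Nat.zero_le _)
      push_cast
      simpa using h
    have hdvd : (q : ℤ) ∣ (P : ℤ) - N := by
      rw [← hsum_v]; exact (ZMod.intCast_zmod_eq_zero_iff_dvd _ _).mp h0
    rw [hsum_abs] at hcon
    have hPN : P = N := by
      have hlt : |(P : ℤ) - N| < q := by rw [abs_lt]; omega
      have := Int.eq_zero_of_abs_lt_dvd hdvd hlt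
      omega
    have hPk : P < k := by omega
    have hP1 : 1 ≤ P := by
      by_contra hc
      apply hv
      funext i
      have hpi : p i = 0 := by
        have hP0 : ∑ i, p i = 0 := by omega
        exact Finset.sum_eq_zero_iff.mp hP0 i (Finset.mem_univ i)
      have hni : n i = 0 := by
        have hN0 : ∑ i, n i = 0 := by omega
        exact Finset.sum_eq_zero_iff.mp hN0 i (Finset.mem_univ i)
      have := hvi i
      simp only [Pi.zero_apply]
      omega
    set f := ∏ i, (X - C (a i)) ^ p i with hf
    set g := ∏ i, (X - C (a i)) ^ n i with hg
    set h := ∏ i, (X - C (a i)) ^ (p i + n i) with hh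
    have hpn0 : ∀ i, p i = 0 ∨ n i = 0 := fun i => by simp only [hp, hn]; omega
    have hfm : f.Monic := monic_prod_of_monic _ _ fun i _ => (monic_X_sub_C _).pow _
    have hgm : g.Monic := monic_prod_of_monic _ _ fun i _ => (monic_X_sub_C _).pow _
    have hhm : h.Monic := monic_prod_of_monic _ _ fun i _ => (monic_X_sub_C _).pow _
    have hfd : f.natDegree = P := by
      rw [hf, natDegree_prod_of_monic _ _ fun i _ => (monic_X_sub_C _).pow _]
      simp [natDegree_pow, natDegree_X_sub_C]
      exact hP.symm
    have hgd : g.natDegree = N := by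
      rw [hg, natDegree_prod_of_monic _ _ fun i _ => (monic_X_sub_C _).pow _]
      simp [natDegree_pow, natDegree_X_sub_C]
      exact hN.symm
    have hhd : h.natDegree = 2 * P := by
      rw [hh, natDegree_prod_of_monic _ _ fun i _ => (monic_X_sub_C _).pow _]
      simp only [natDegree_pow, natDegree_X_sub_C, mul_one]
      rw [Finset.sum_add_distrib]
      omega
    by_cases hfg : f = g
    · -- evaluation contradiction
      obtain ⟨i₀, hi₀⟩ : ∃ i, v i ≠ 0 := by
        by_contra hc; push_neg at hc; exact hv (funext fun i => hc i)
      have heval : ∀ (e : Fin q → ℕ) (c : ZMod q), (∀ j, e j ≠ 0 → a j ≠ c) →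
          (∏ i, (X - C (a i)) ^ e i).eval c ≠ 0 := by
        intro e c hc
        rw [eval_prod]
        refine Finset.prod_ne_zero_iff.mpr fun j _ => ?_
        rcases eq_or_ne (e j) 0 with hj | hj
        · simp [hj]
        · simp only [eval_pow, eval_sub, eval_X, eval_C]
          exact pow_ne_zero _ (sub_ne_zero.mpr (Ne.symm (hc j hj)))
      have hzero : ∀ (e : Fin q → ℕ) (i : Fin q), e i ≠ 0 →
          (∏ j, (X - C (a j)) ^ e j).eval (a i) = 0 := by
        intro e i hi
        rw [eval_prod]
        refine Finset.prod_eq_zero (Finset.mem_univ i) ?_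
        simp only [eval_pow, eval_sub, eval_X, eval_C, sub_self]
        exact zero_pow hi
      rcases lt_or_gt_of_ne hi₀ with hneg | hpos
      · have h1 : g.eval (a i₀) = 0 := hzero n i₀ (by simp only [hn]; omega)
        have h2 : f.eval (a i₀) ≠ 0 := by
          refine heval p (a i₀) fun j hj => ?_
          intro heq
          have : j = i₀ := ha.1 heq
          subst this
          simp only [hp] at hj
          omega
        rw [hfg] at h2
        exact h2 h1
      · have h1 : f.eval (a i₀) = 0 := hzero p i₀ (by simp only [hp]; omega)
        have h2 : g.eval (a i₀) ≠ 0 := by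
          refine heval n (a i₀) fun j hj => ?_
          intro heq
          have : j = i₀ := ha.1 heq
          subst this
          simp only [hn] at hj
          omega
        rw [← hfg] at h2
        exact h2 h1
    · -- Wronskian contradiction
      set r := g - f with hr
      have hr0 : r ≠ 0 := sub_ne_zero.mpr (Ne.symm hfg)
      have hdegr : r.natDegree < P := by
        rw [natDegree_lt_iff_degree_lt hr0]
        have hdfg : g.degree = f.degree := by
          rw [degree_eq_natDegree hgm.ne_zero, degree_eq_natDegree hfm.ne_zero, hfd, hgd, hPN]
        have := degree_sub_lt hdfg hgm.ne_zero (by rw [hgm.leadingCoeff, hfm.leadingCoeff])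
        rw [hdfg, degree_eq_natDegree hfm.ne_zero, hfd] at this
        exact this
      set ρ := r.natDegree with hρ
      set m := P - 1 + ρ with hm
      set R := derivative f * g - f * derivative g with hR
      have key1 : R.coeff m ≠ 0 := by
        have hgfr : g = f + r := by rw [hr]; ring
        have hR2 : R = derivative f * r - f * derivative r := by
          rw [hR, hgfr, map_add]; ring
        have hdf : (derivative f).natDegree ≤ P - 1 := by
          have := natDegree_derivative_lt (p := f) (by omega)
          omega
        have hcoefP : f.coeff P = 1 := by rw [← hfd]; exact hfm.coeff_natDegree
        have c1 : (derivative f * r).coeff m = (P : ZMod q) * r.coeff ρ := by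
          rw [hm, coeff_mul_add_eq_of_natDegree_le hdf (le_refl ρ), coeff_derivative,
            show P - 1 + 1 = P from by omega, hcoefP,
            show (((P - 1 : ℕ) : ZMod q) + 1) = (P : ZMod q) from by
              rw [Nat.cast_sub (by omega)]; ring]
          ring
        have c2 : (f * derivative r).coeff m = (ρ : ZMod q) * r.coeff ρ := by
          rcases Nat.eq_zero_or_pos ρ with h0 | hpos
          · obtain ⟨c, hc⟩ := natDegree_eq_zero.mp h0
            rw [← hc, derivative_C, mul_zero, coeff_zero, h0]
            simp
          · have hdr : (derivative r).natDegree ≤ ρ - 1 := by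
              have := natDegree_derivative_lt (p := r) (by omega)
              omega
            rw [show m = P + (ρ - 1) from by omega,
              coeff_mul_add_eq_of_natDegree_le (le_of_eq hfd) hdr, coeff_derivative,
              show ρ - 1 + 1 = ρ from by omega, hcoefP,
              show (((ρ - 1 : ℕ) : ZMod q) + 1) = (ρ : ZMod q) from by
                rw [Nat.cast_sub (by omega)]; ring]
            ring
        rw [hR2, coeff_sub, c1, c2, ← sub_mul]
        apply mul_ne_zero
        · have : ((P - ρ : ℕ) : ZMod q) ≠ 0 := by
            rw [Ne, ZMod.natCast_eq_zero_iff]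
            intro hd
            have := Nat.le_of_dvd (by omega) hd
            omega
          rwa [Nat.cast_sub (by omega)] at this
        · rw [hρ]
          exact leadingCoeff_ne_zero.mpr hr0
      have key2 : R.coeff m = 0 := by
        have hkey : R = ∑ i, C ((v i : ZMod q)) * (h /ₘ (X - C (a i))) := by
          rw [hR, hf, hg, hh]
          rw [RS_wronskian_aux a p n hpn0]
          refine Finset.sum_congr rfl fun i _ => ?_
          congr 2
          have := hvi i
          have : ((v i : ℤ) : ZMod q) = ((p i : ℤ) - (n i : ℤ) : ℤ) := by rw [← this]
          push_cast at this ⊢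
          exact this.symm
        rw [hkey, finset_sum_coeff]
        simp only [coeff_C_mul, coeff_divByMonic_X_sub_C]
        simp_rw [Finset.mul_sum]
        rw [Finset.sum_comm]
        refine Finset.sum_eq_zero fun s hs => ?_
        rw [Finset.mem_Icc, hhd] at hs
        have he : s - (m + 1) ≤ k - 1 := by omega
        have hswap : ∑ i, (v i : ZMod q) * (a i ^ (s - (m + 1)) * h.coeff s)
            = (∑ i, (v i : ZMod q) * a i ^ (s - (m + 1))) * h.coeff s := by
          rw [Finset.sum_mul]
          exact Finset.sum_congr rfl fun i _ => (mul_assoc _ _ _).symm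
        rw [hswap, hmem _ he, zero_mul]
      exact key1 key2
end

section
/- Let q be a prime, 1 < k ≤ q/2, and 1 ≤ p < ∞. For the Reed–Solomon lattice L_{q,k} ⊆ ℤ^q, every nonzero lattice vector v satisfies ‖v‖_p ≥ (2k)^{1/p}. -/
open PowerSeries Polynomial

section Aux

variable {F : Type} [Field F]

/-- geometric series -/
private noncomputable def geo (α : F) : F⟦X⟧ := PowerSeries.mk (fun n => α ^ n)

private lemma geo_inv (α : F) :
    ((1 : F⟦X⟧) - PowerSeries.C α * PowerSeries.X) * geo α = 1 := by
  ext n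
  rw [geo, sub_mul, one_mul, map_sub, mul_assoc]
  cases n with
  | zero => simp
  | succ n => simp [PowerSeries.coeff_C_mul, PowerSeries.coeff_succ_X_mul, pow_succ, mul_comm]

private noncomputable def polOf (S : Multiset F) : Polynomial F :=
  (S.map (fun α => 1 - Polynomial.C α * Polynomial.X)).prod

private noncomputable def sig (S : Multiset F) : F⟦X⟧ :=
  (S.map (fun α => PowerSeries.C α * geo α)).sum

private lemma polOf_cons (α : F) (S : Multiset F) :
    polOf (α ::ₘ S) = (1 - Polynomial.C α * Polynomial.X) * polOf S := by
  simp [polOf]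

private lemma sig_cons (α : F) (S : Multiset F) :
    sig (α ::ₘ S) = PowerSeries.C α * geo α + sig S := by
  simp [sig]

private lemma logderiv (S : Multiset F) :
    PowerSeries.derivative F (polOf S : F⟦X⟧) = -(polOf S : F⟦X⟧) * sig S := by
  induction S using Multiset.induction_on with
  | empty => simp [polOf, sig]
  | cons α S ih =>
    rw [polOf_cons, sig_cons, Polynomial.coe_mul, Derivation.leibniz, smul_eq_mul, smul_eq_mul, ih]
    have hc : ((1 - Polynomial.C α * Polynomial.X : Polynomial F) : F⟦X⟧)
        = 1 - PowerSeries.C α * PowerSeries.X := by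
      push_cast [Polynomial.coe_sub, Polynomial.coe_mul, Polynomial.coe_one, Polynomial.coe_C,
        Polynomial.coe_X]
      ring
    have hd : PowerSeries.derivative F ((1 - Polynomial.C α * Polynomial.X : Polynomial F) : F⟦X⟧)
        = -PowerSeries.C α := by
      rw [PowerSeries.derivative_coe]
      simp
    rw [hd, hc]
    have hinv := geo_inv α
    set u : F⟦X⟧ := 1 - PowerSeries.C α * PowerSeries.X
    set P : F⟦X⟧ := (polOf S : F⟦X⟧)
    set G : F⟦X⟧ := geo α
    linear_combination (P * PowerSeries.C α) * hinv

private lemma coeff_zero_polOf (S : Multiset F) : (polOf S).coeff 0 = 1 := by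
  induction S using Multiset.induction_on with
  | empty => simp [polOf]
  | cons α S ih => rw [polOf_cons, Polynomial.mul_coeff_zero, ih]; simp

private lemma natDegree_polOf_le (S : Multiset F) : (polOf S).natDegree ≤ Multiset.card S := by
  refine le_trans (Polynomial.natDegree_multiset_prod_le _) ?_
  rw [Multiset.map_map]
  refine le_trans (Multiset.sum_le_card_nsmul _ 1 ?_) ?_
  · intro x hx
    simp only [Multiset.mem_map, Function.comp] at hx
    obtain ⟨α, _, rfl⟩ := hx
    refine le_trans (Polynomial.natDegree_sub_le _ _) ?_
    simp only [Polynomial.natDegree_one, sup_le_iff]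
    exact ⟨Nat.zero_le 1, le_trans (Polynomial.natDegree_C_mul_le _ _) (by simp)⟩
  · simp

private lemma coeff_sig (S : Multiset F) (n : ℕ) :
    PowerSeries.coeff n (sig S) = (S.map (fun α => α ^ (n + 1))).sum := by
  rw [sig]
  rw [map_multiset_sum]
  rw [Multiset.map_map]
  congr 1
  apply Multiset.map_congr rfl
  intro α _
  simp [geo, PowerSeries.coeff_C_mul, pow_succ, mul_comm]

private lemma roots_polOf (S : Multiset F) (hS : ∀ α ∈ S, α ≠ 0) :
    (polOf S).roots = S.map (fun α => α⁻¹) := by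
  induction S using Multiset.induction_on with
  | empty => simp [polOf]
  | cons α S ih =>
    have hα : α ≠ 0 := hS α (Multiset.mem_cons_self _ _)
    have hS' : ∀ β ∈ S, β ≠ 0 := fun β hβ => hS β (Multiset.mem_cons_of_mem hβ)
    have h1 : (1 - Polynomial.C α * Polynomial.X : Polynomial F)
        = Polynomial.C (-α) * (Polynomial.X - Polynomial.C α⁻¹) := by
      rw [map_neg, neg_mul, mul_sub, ← Polynomial.C_mul, mul_inv_cancel₀ hα, Polynomial.C_1]
      ring
    have hne : (polOf (α ::ₘ S)) ≠ 0 := fun h => by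
      have := coeff_zero_polOf (α ::ₘ S); rw [h] at this; simp at this
    rw [polOf_cons] at hne ⊢
    rw [Polynomial.roots_mul hne, ih hS', h1, Polynomial.roots_C_mul _ (neg_ne_zero.mpr hα),
      Polynomial.roots_X_sub_C, Multiset.map_cons]
    rfl

/-- The key algebraic lemma: two multisets over a field with equal small power sums and
equal cardinality less than k are equal. -/
private lemma multiset_eq (k : ℕ) (hk : 1 ≤ k) (A B : Multiset F)
    (hcard : Multiset.card A = Multiset.card B) (hA : Multiset.card A < k)
    (hinv : ∀ j : ℕ, 0 < j → j < k → (j : F) ≠ 0)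
    (hpow : ∀ j : ℕ, 0 < j → j ≤ k - 1 →
      (A.map (fun α => α ^ j)).sum = (B.map (fun α => α ^ j)).sum) :
    A = B := by
  classical
  -- power series setup
  set PA : F⟦X⟧ := (polOf A : F⟦X⟧) with hPA
  set PB : F⟦X⟧ := (polOf B : F⟦X⟧) with hPB
  have hccA : PowerSeries.constantCoeff PA = 1 := by
    rw [hPA, ← PowerSeries.coeff_zero_eq_constantCoeff_apply, Polynomial.coeff_coe,
      coeff_zero_polOf]
  have hccB : PowerSeries.constantCoeff PB = 1 := by
    rw [hPB, ← PowerSeries.coeff_zero_eq_constantCoeff_apply, Polynomial.coeff_coe,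
      coeff_zero_polOf]
  have hu : PA * PA⁻¹ = 1 := PowerSeries.mul_inv_cancel _ (by rw [hccA]; exact one_ne_zero)
  set S : F⟦X⟧ := PA⁻¹ * (PA - PB) with hS
  -- derivative of S
  have hdS : PowerSeries.derivative F S = PA⁻¹ * PB * (sig B - sig A) := by
    rw [hS, Derivation.leibniz, smul_eq_mul, smul_eq_mul, map_sub,
      PowerSeries.derivative_inv', logderiv A, logderiv B]
    linear_combination (PA⁻¹ * PA * sig A - PA⁻¹ * PB * sig A) * hu
  -- the sigma difference has low order vanishing
  have hsig : ∀ n : ℕ, n < k - 1 → PowerSeries.coeff n (sig B - sig A) = 0 := by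
    intro n hn
    rw [map_sub, coeff_sig, coeff_sig, hpow (n + 1) (Nat.succ_pos n) (by omega), sub_self]
  -- coefficients of S vanish below k
  have hcoeffS : ∀ n : ℕ, n < k → PowerSeries.coeff n S = 0 := by
    intro n hn
    rcases Nat.eq_zero_or_pos n with rfl | hnpos
    · rw [hS, PowerSeries.coeff_zero_eq_constantCoeff_apply, map_mul, map_sub, hccA, hccB,
        sub_self, mul_zero]
    · have h1 : PowerSeries.coeff (n - 1) (PowerSeries.derivative F S) = 0 := by
        rw [hdS, show PA⁻¹ * PB * (sig B - sig A) = (sig B - sig A) * (PA⁻¹ * PB) by ring]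
        rw [PowerSeries.coeff_mul]
        apply Finset.sum_eq_zero
        intro x hx
        rw [Finset.HasAntidiagonal.mem_antidiagonal] at hx
        rw [hsig x.1 (by omega), zero_mul]
      rw [PowerSeries.coeff_derivative] at h1
      have h2 : (PowerSeries.coeff (n - 1 + 1) S) * ((n - 1 : ℕ) + 1 : F) = 0 := h1
      have h3 : ((n - 1 : ℕ) + 1 : F) ≠ 0 := by
        have : (((n - 1) + 1 : ℕ) : F) ≠ 0 := hinv _ (by omega) (by omega)
        push_cast at this ⊢
        exact this
      have := mul_eq_zero.mp h2
      rcases this with h | h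
      · rwa [show n - 1 + 1 = n by omega] at h
      · exact absurd h h3
  -- polynomial difference is zero
  have hpol : polOf A = polOf B := by
    have hprod : PA * S = PA - PB := by
      rw [hS, show PA * (PA⁻¹ * (PA - PB)) = PA * PA⁻¹ * (PA - PB) by ring, hu, one_mul]
    apply Polynomial.ext
    intro n
    rcases lt_or_ge n k with hn | hn
    · have : PowerSeries.coeff n (PA - PB) = 0 := by
        rw [← hprod, PowerSeries.coeff_mul]
        apply Finset.sum_eq_zero
        intro x hx
        rw [Finset.HasAntidiagonal.mem_antidiagonal] at hx
        rw [hcoeffS x.2 (by omega), mul_zero]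
      rw [map_sub, hPA, hPB, Polynomial.coeff_coe, Polynomial.coeff_coe, sub_eq_zero] at this
      exact this
    · rw [Polynomial.coeff_eq_zero_of_natDegree_lt
        (lt_of_le_of_lt (natDegree_polOf_le A) (by omega)),
        Polynomial.coeff_eq_zero_of_natDegree_lt
        (lt_of_le_of_lt (natDegree_polOf_le B) (by omega))]
  -- now extract the multiset equality
  have hfilt : ∀ S : Multiset F, polOf S = polOf (S.filter (· ≠ 0)) := by
    intro S
    conv_lhs => rw [← Multiset.filter_add_not (· ≠ 0) S]
    rw [polOf, Multiset.map_add, Multiset.prod_add, ← polOf]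
    have : ((S.filter (fun x => ¬ x ≠ 0)).map
        (fun α => 1 - Polynomial.C α * Polynomial.X)).prod = 1 := by
      apply Multiset.prod_eq_one
      intro x hx
      rw [Multiset.mem_map] at hx
      obtain ⟨α, hα, rfl⟩ := hx
      rw [Multiset.mem_filter] at hα
      have : α = 0 := by simpa using hα.2
      simp [this]
    rw [this, mul_one]
  have hroots : (A.filter (· ≠ 0)).map (fun α => α⁻¹) = (B.filter (· ≠ 0)).map (fun α => α⁻¹) := by
    rw [← roots_polOf _ (fun α hα => (Multiset.mem_filter.mp hα).2),
      ← roots_polOf _ (fun α hα => (Multiset.mem_filter.mp hα).2), ← hfilt, ← hfilt, hpol]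
  have hfeq : A.filter (· ≠ 0) = B.filter (· ≠ 0) :=
    Multiset.map_injective inv_injective hroots
  have hcf : ∀ S : Multiset F,
      Multiset.card S = Multiset.card (S.filter (· ≠ 0)) + Multiset.count 0 S := by
    intro S
    conv_lhs => rw [← Multiset.filter_add_not (· ≠ 0) S]
    rw [Multiset.card_add]
    congr 1
    rw [Multiset.count_eq_card_filter_eq]
    congr 1
    exact Multiset.filter_congr (fun x _ => by simp [eq_comm])
  have hzero : Multiset.count 0 A = Multiset.count 0 B := by
    have cA := hcf A
    have cB := hcf B
    rw [hfeq] at cA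
    omega
  ext c
  rcases eq_or_ne c 0 with rfl | hc
  · exact hzero
  · have h1 : Multiset.count c A = Multiset.count c (A.filter (· ≠ 0)) := by
      rw [Multiset.count_filter, if_pos hc]
    have h2 : Multiset.count c B = Multiset.count c (B.filter (· ≠ 0)) := by
      rw [Multiset.count_filter, if_pos hc]
    rw [h1, h2, hfeq]

end Aux


private lemma multiset_map_sum_sum {ι M N : Type*} [AddCommMonoid N] (s : Finset ι)
    (g : ι → Multiset M) (f : M → N) :
    ((∑ i ∈ s, g i).map f).sum = ∑ i ∈ s, ((g i).map f).sum := by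
  induction s using Finset.cons_induction with
  | empty => simp
  | cons i s hi ih => rw [Finset.sum_cons, Finset.sum_cons, Multiset.map_add, Multiset.sum_add, ih]

private lemma multiset_card_sum {ι M : Type*} (s : Finset ι) (g : ι → Multiset M) :
    Multiset.card (∑ i ∈ s, g i) = ∑ i ∈ s, Multiset.card (g i) := by
  induction s using Finset.cons_induction with
  | empty => simp
  | cons i s hi ih => rw [Finset.sum_cons, Finset.sum_cons, Multiset.card_add, ih]

theorem stmt_2 (q k : ℕ) (hq : q.Prime) (hk : 1 < k) (hkq : 2 * k ≤ q)
    (p : ℝ) (hp : 1 ≤ p)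
    (a : Fin q → ZMod q) (ha : Function.Bijective a)
    (v : Fin q → ℤ) (hv : v ≠ 0)
    (hmem : ∀ j : ℕ, j ≤ k - 1 → ∑ i, (v i : ZMod q) * a i ^ j = 0) :
    ((2 * k : ℝ)) ^ (1 / p) ≤ (∑ i, |(v i : ℝ)| ^ p) ^ (1 / p) := by
  haveI : Fact q.Prime := ⟨hq⟩
  haveI : NeZero q := ⟨hq.pos.ne'⟩
  classical
  have key : 2 * k ≤ ∑ i, (v i).natAbs := by
    by_contra hN
    push_neg at hN
    set A : Multiset (ZMod q) := ∑ i, (v i).toNat • ({a i} : Multiset (ZMod q)) with hA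
    set B : Multiset (ZMod q) := ∑ i, (-v i).toNat • ({a i} : Multiset (ZMod q)) with hB
    have cardA : Multiset.card A = ∑ i, (v i).toNat := by
      rw [hA, multiset_card_sum]
      simp
    have cardB : Multiset.card B = ∑ i, (-v i).toNat := by
      rw [hB, multiset_card_sum]
      simp
    have hsplit : ∀ i, (v i).natAbs = (v i).toNat + (-v i).toNat := fun i => by omega
    have hNsum : Multiset.card A + Multiset.card B = ∑ i, (v i).natAbs := by
      rw [cardA, cardB, ← Finset.sum_add_distrib]
      exact Finset.sum_congr rfl (fun i _ => (hsplit i).symm)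
    -- power sums
    have psumA : ∀ (w : Fin q → ℕ) (j : ℕ),
        (((∑ i, w i • ({a i} : Multiset (ZMod q))).map (fun α => α ^ j)).sum)
          = ∑ i, (w i : ZMod q) * a i ^ j := by
      intro w j
      rw [multiset_map_sum_sum]
      apply Finset.sum_congr rfl
      intro i _
      rw [Multiset.nsmul_singleton, Multiset.map_replicate, Multiset.sum_replicate,
        nsmul_eq_mul]
    -- cast lemma
    have hcast : ∀ i, ((v i).toNat : ZMod q) - ((-v i).toNat : ZMod q) = ((v i : ℤ) : ZMod q) := by
      intro i
      rw [← Int.cast_natCast (R := ZMod q), ← Int.cast_natCast (R := ZMod q) ((-v i).toNat),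
        ← Int.cast_sub]
      congr 1
      omega
    have hpow : ∀ j : ℕ, 0 < j → j ≤ k - 1 →
        (A.map (fun α => α ^ j)).sum = (B.map (fun α => α ^ j)).sum := by
      intro j _ hj
      rw [hA, hB, psumA, psumA, ← sub_eq_zero, ← Finset.sum_sub_distrib]
      rw [← hmem j hj]
      apply Finset.sum_congr rfl
      intro i _
      rw [← sub_mul, hcast]
    have hcardeq : Multiset.card A = Multiset.card B := by
      have h0 := hmem 0 (Nat.zero_le _)
      simp only [pow_zero, mul_one] at h0
      have : ((Multiset.card A : ℕ) : ZMod q) = ((Multiset.card B : ℕ) : ZMod q) := by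
        rw [cardA, cardB, ← sub_eq_zero, Nat.cast_sum, Nat.cast_sum, ← Finset.sum_sub_distrib,
          ← h0]
        apply Finset.sum_congr rfl
        intro i _
        have := hcast i
        rw [← this]
      have hval := congrArg ZMod.val this
      rwa [ZMod.val_cast_of_lt (by omega), ZMod.val_cast_of_lt (by omega)] at hval
    have hcardlt : Multiset.card A < k := by omega
    have hinv : ∀ j : ℕ, 0 < j → j < k → ((j : ℕ) : ZMod q) ≠ 0 := by
      intro j hj1 hj2 hcontra
      rw [ZMod.natCast_eq_zero_iff] at hcontra
      have := Nat.le_of_dvd hj1 hcontra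
      omega
    have hABeq : A = B := multiset_eq k (by omega) A B hcardeq hcardlt hinv hpow
    -- conclude v = 0
    apply hv
    funext i
    have hcount : Multiset.count (a i) A = Multiset.count (a i) B := by rw [hABeq]
    have hcA : ∀ (w : Fin q → ℕ),
        Multiset.count (a i) (∑ j, w j • ({a j} : Multiset (ZMod q))) = w i := by
      intro w
      rw [Multiset.count_sum']
      rw [Finset.sum_eq_single i]
      · rw [Multiset.nsmul_singleton, Multiset.count_replicate, if_pos rfl]
      · intro j _ hji
        have hne : a i ≠ a j := fun h => hji (ha.injective h.symm)
        rw [Multiset.nsmul_singleton, Multiset.count_replicate,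
          if_neg (fun h => hji (ha.injective h))]
      · simp
    rw [hA, hB, hcA, hcA] at hcount
    have : v i = 0 := by omega
    simpa using this
  -- analytic part
  have hp0 : (0:ℝ) < p := lt_of_lt_of_le one_pos hp
  have hsum : (2 * k : ℝ) ≤ ∑ i, |(v i : ℝ)| ^ p := by
    have h1 : ∀ i : Fin q, ((v i).natAbs : ℝ) ≤ |(v i : ℝ)| ^ p := by
      intro i
      have habs : |(v i : ℝ)| = ((v i).natAbs : ℝ) := by
        have h2 : (((v i).natAbs : ℤ) : ℝ) = ((v i).natAbs : ℝ) := Int.cast_natCast _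
        rw [← h2, Int.natCast_natAbs, Int.cast_abs]
      rcases eq_or_ne (v i) 0 with h0 | h0
      · rw [habs, h0]
        simp [Real.zero_rpow hp0.ne']
      · have h1le : (1:ℝ) ≤ |(v i : ℝ)| := by
          rw [habs]
          have : 1 ≤ (v i).natAbs := Int.natAbs_pos.mpr h0
          exact_mod_cast this
        calc ((v i).natAbs : ℝ) = |(v i : ℝ)| ^ (1:ℝ) := by rw [Real.rpow_one, habs]
          _ ≤ |(v i : ℝ)| ^ p := Real.rpow_le_rpow_of_exponent_le h1le hp
    calc (2 * k : ℝ) ≤ ((∑ i, (v i).natAbs : ℕ) : ℝ) := by exact_mod_cast key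
      _ = ∑ i, ((v i).natAbs : ℝ) := by push_cast; ring
      _ ≤ ∑ i, |(v i : ℝ)| ^ p := Finset.sum_le_sum (fun i _ => h1 i)
  exact Real.rpow_le_rpow (by positivity) hsum (le_of_lt (by positivity))
end

section
/- Let q be a prime and 2 ≤ k ≤ h < q. The projective variety X̄_{k,h} ⊂ ℙ^{h−1} over 𝔽_q defined by the equations ∑_{i=1}^h x_i^j = 0 for 1 ≤ j ≤ k−1 is smooth, i.e., has no singular points: at every point of the variety, the (k−1) × h Jacobian matrix with rows ((j x_1^{j−1}, …, j x_h^{j−1}))_{1 ≤ j ≤ k−1} has rank k−1. -/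
open Finset Matrix

lemma aux_cast_ne_zero {K : Type*} [Field K] (q : ℕ) [CharP K q] {n : ℕ}
    (h1 : 0 < n) (h2 : n < q) : (n : K) ≠ 0 := by
  rw [Ne, CharP.cast_eq_zero_iff K q]
  exact fun hd => absurd (Nat.le_of_dvd h1 hd) (not_le.2 h2)

lemma aux_distinct {K : Type*} [Field K] [DecidableEq K] {q k h : ℕ} [CharP K q]
    (hk : 2 ≤ k) (hkh : k ≤ h) (hhq : h < q)
    (x : Fin h → K) (hx : x ≠ 0)
    (hsol : ∀ j : ℕ, 1 ≤ j → j ≤ k - 1 → ∑ i, x i ^ j = 0) :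
    k - 1 ≤ (Finset.image x Finset.univ).card := by
  classical
  by_contra hcon
  push_neg at hcon
  set S : Finset K := (Finset.image x Finset.univ).erase 0 with hS
  set d := S.card with hd
  have hdk : d ≤ k - 1 := le_trans (Finset.card_erase_le) (Nat.le_of_lt_succ
    (lt_of_lt_of_le hcon (by omega)))
  -- S is nonempty
  have hxne : ∃ i, x i ≠ 0 := by
    by_contra hc
    push_neg at hc
    exact hx (funext hc)
  obtain ⟨i0, hi0⟩ := hxne
  have hS0 : x i0 ∈ S := Finset.mem_erase.mpr ⟨hi0, Finset.mem_image_of_mem x (Finset.mem_univ i0)⟩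
  have hdpos : 0 < d := Finset.card_pos.mpr ⟨x i0, hS0⟩
  haveI : NeZero d := ⟨hdpos.ne'⟩
  -- enumeration of S
  set w : Fin d → K := fun i => (S.equivFin.symm i).val with hw
  have hwinj : Function.Injective w := fun a b hab => by
    apply S.equivFin.symm.injective
    exact Subtype.ext hab
  have hwS : ∀ i, w i ∈ S := fun i => (S.equivFin.symm i).2
  have hwne : ∀ i, w i ≠ 0 := fun i => (Finset.mem_erase.mp (hwS i)).1
  -- multiplicities
  set m : Fin d → K := fun i => ((Finset.univ.filter fun t => x t = w i).card : K) with hm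
  have hmne : ∀ i, m i ≠ 0 := by
    intro i
    have hpos : 0 < (Finset.univ.filter fun t => x t = w i).card := by
      have : w i ∈ Finset.image x Finset.univ := (Finset.mem_erase.mp (hwS i)).2
      obtain ⟨t, _, ht⟩ := Finset.mem_image.mp this
      exact Finset.card_pos.mpr ⟨t, Finset.mem_filter.mpr ⟨Finset.mem_univ t, ht⟩⟩
    have hle : (Finset.univ.filter fun t => x t = w i).card ≤ h := by
      simpa using Finset.card_filter_le Finset.univ (fun t => x t = w i)
    exact aux_cast_ne_zero q hpos (lt_of_le_of_lt hle hhq)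
  -- the key equations
  have key : ∀ j : ℕ, 1 ≤ j → j ≤ k - 1 → ∑ i : Fin d, m i * w i ^ j = 0 := by
    intro j hj1 hj2
    have e1 : ∑ z ∈ Finset.image x Finset.univ,
        ((Finset.univ.filter fun t => x t = z).card : K) * z ^ j = ∑ i, x i ^ j := by
      rw [← Finset.sum_fiberwise_of_maps_to' (fun i _ => Finset.mem_image_of_mem x (Finset.mem_univ i))
        (fun z => (z : K) ^ j)]
      refine Finset.sum_congr rfl fun z _ => ?_
      rw [Finset.sum_const, nsmul_eq_mul]
    have e2 : ∑ z ∈ S, ((Finset.univ.filter fun t => x t = z).card : K) * z ^ j = ∑ i, x i ^ j := by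
      rw [hS, Finset.sum_erase _ (by simp [zero_pow (by omega : j ≠ 0)]), e1]
    have e3 : ∑ z ∈ S, ((Finset.univ.filter fun t => x t = z).card : K) * z ^ j
        = ∑ i : Fin d, m i * w i ^ j := by
      rw [← Finset.sum_attach S (fun z => ((Finset.univ.filter fun t => x t = z).card : K) * z ^ j)]
      exact (Equiv.sum_comp S.equivFin.symm
        (fun z => ((Finset.univ.filter fun t => x t = (z : K)).card : K) * (z : K) ^ j)).symm
    rw [← e3, e2, hsol j hj1 hj2]
  -- the Vandermonde matrix
  set A : Matrix (Fin d) (Fin d) K := Matrix.of fun j i => w i ^ ((j : ℕ) + 1) with hA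
  have hAm : A.mulVec m = 0 := by
    funext j
    have := key ((j : ℕ) + 1) (by omega) (by have := j.2; omega)
    simp only [Matrix.mulVec, dotProduct, hA, Matrix.of_apply, Pi.zero_apply]
    rw [← this]
    exact Finset.sum_congr rfl fun i _ => mul_comm _ _
  have hAt : Aᵀ = Matrix.diagonal w * Matrix.vandermonde w := by
    ext i j
    simp [hA, Matrix.diagonal_mul, Matrix.vandermonde, pow_succ']
  have hdet : A.det ≠ 0 := by
    rw [← Matrix.det_transpose, hAt, Matrix.det_mul, Matrix.det_diagonal,
      Matrix.det_vandermonde]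
    refine mul_ne_zero (Finset.prod_ne_zero_iff.mpr fun i _ => hwne i) ?_
    refine Finset.prod_ne_zero_iff.mpr fun i _ => Finset.prod_ne_zero_iff.mpr fun j hj => ?_
    rw [Finset.mem_Ioi] at hj
    exact sub_ne_zero.mpr fun hc => (ne_of_lt hj) (hwinj hc.symm)
  have hu : IsUnit A.det := isUnit_iff_ne_zero.mpr hdet
  have hm0 : m = 0 := by
    have h1 : (A⁻¹ * A).mulVec m = m := by
      rw [Matrix.nonsing_inv_mul _ hu, Matrix.one_mulVec]
    rw [← Matrix.mulVec_mulVec, hAm, Matrix.mulVec_zero] at h1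
    exact h1.symm
  exact hmne ⟨0, hdpos⟩ (by rw [hm0]; rfl)

theorem stmt_6 (q k h : ℕ) [Fact q.Prime] (hk : 2 ≤ k) (hkh : k ≤ h) (hhq : h < q)
    (x : Fin h → AlgebraicClosure (ZMod q)) (hx : x ≠ 0)
    (hsol : ∀ j : ℕ, 1 ≤ j → j ≤ k - 1 → ∑ i, x i ^ j = 0) :
    (Matrix.of fun (j : Fin (k - 1)) (i : Fin h) =>
      ((j : ℕ) + 1 : AlgebraicClosure (ZMod q)) * x i ^ (j : ℕ)).rank = k - 1 := by
  classical
  haveI : CharP (AlgebraicClosure (ZMod q)) q := inferInstance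
  set M : Matrix (Fin (k-1)) (Fin h) (AlgebraicClosure (ZMod q)) := Matrix.of fun (j : Fin (k - 1)) (i : Fin h) =>
      ((j : ℕ) + 1 : AlgebraicClosure (ZMod q)) * x i ^ (j : ℕ) with hM
  have hcard := aux_distinct (q := q) hk hkh hhq x hx hsol
  -- choose k-1 distinct values
  obtain ⟨T, hTsub, hTcard⟩ := Finset.exists_subset_card_eq hcard
  set u : Fin (k-1) → AlgebraicClosure (ZMod q) := fun i => (T.equivFin.symm (Fin.cast hTcard.symm i)).val with hu
  have huinj : Function.Injective u := by
    intro a b hab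
    have := T.equivFin.symm.injective (Subtype.ext hab)
    exact Fin.cast_injective _ this
  have huim : ∀ i, ∃ t : Fin h, x t = u i := by
    intro i
    have : u i ∈ Finset.image x Finset.univ := hTsub (T.equivFin.symm (Fin.cast hTcard.symm i)).2
    obtain ⟨t, _, ht⟩ := Finset.mem_image.mp this
    exact ⟨t, ht⟩
  choose g hg using huim
  have hxg : Function.Injective (x ∘ g) := by
    intro a b hab
    apply huinj
    rw [← hg a, ← hg b]; exact hab
  -- the selection matrix
  set P : Matrix (Fin h) (Fin (k-1)) (AlgebraicClosure (ZMod q)) := Matrix.of fun i t => if i = g t then 1 else 0 with hP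
  have hMP : M * P = M.submatrix id g := by
    ext j t
    simp only [Matrix.mul_apply, hP, Matrix.of_apply, mul_ite, mul_one, mul_zero,
      Matrix.submatrix_apply, id]
    rw [Finset.sum_ite_eq' Finset.univ (g t) (fun i => M j i)]
    simp
  set B := M.submatrix id g with hB
  have hBeq : B = Matrix.diagonal (fun j : Fin (k-1) => ((j : ℕ) + 1 : AlgebraicClosure (ZMod q))) *
      (Matrix.vandermonde (x ∘ g))ᵀ := by
    ext j t
    simp [hB, hM, Matrix.diagonal_mul, Matrix.vandermonde]
  have hdetB : B.det ≠ 0 := by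
    rw [hBeq, Matrix.det_mul, Matrix.det_transpose, Matrix.det_diagonal, Matrix.det_vandermonde]
    refine mul_ne_zero (Finset.prod_ne_zero_iff.mpr fun j _ => ?_) ?_
    · have : ((j : ℕ) + 1 : AlgebraicClosure (ZMod q)) = (((j : ℕ) + 1 : ℕ) : AlgebraicClosure (ZMod q)) := by push_cast; ring
      rw [this]
      exact aux_cast_ne_zero q (Nat.succ_pos _) (by have := j.2; omega)
    · refine Finset.prod_ne_zero_iff.mpr fun i _ => Finset.prod_ne_zero_iff.mpr fun j hj => ?_
      rw [Finset.mem_Ioi] at hj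
      exact sub_ne_zero.mpr fun hc => (ne_of_lt hj) (hxg hc.symm)
  have hBrank : B.rank = k - 1 := by
    rw [Matrix.rank_of_isUnit B (Matrix.isUnit_iff_isUnit_det B |>.mpr
      (isUnit_iff_ne_zero.mpr hdetB))]
    simp
  refine le_antisymm ?_ ?_
  · simpa using M.rank_le_card_height
  · calc k - 1 = B.rank := hBrank.symm
      _ = (M * P).rank := by rw [hMP]
      _ ≤ M.rank := Matrix.rank_mul_le_left M P
end

section
/- Let α_1,…,α_{d_1}, β_1,…,β_{d_2} be complex numbers and suppose there is a constant C and real B > 0 such that for all positive integers e, |∑_{j=1}^{d_2} β_j^e − ∑_{i=1}^{d_1} α_i^e| ≤ C · B^e. If the rational function ∑_j 1/(1−β_j T) − ∑_i 1/(1−α_i T) is written in lowest terms (no common factors between numerator and denominator after cancellation), then every α_i and every β_j appearing satisfies |α_i| ≤ B and |β_j| ≤ B. -/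
open Polynomial Finset in
lemma aux_key (G : Finset ℂ) (c : ℂ → ℂ) (hc : ∀ γ ∈ G, c γ ≠ 0)
    (K M : ℝ) (hM : 0 < M)
    (hb : ∀ e : ℕ, 1 ≤ e → ‖∑ γ ∈ G, c γ * γ ^ e‖ ≤ K * M ^ e) :
    ∀ γ ∈ G, ‖γ‖ ≤ M := by
  intro γ₀ hγ₀
  by_contra hlt
  push_neg at hlt
  set P : Polynomial ℂ := ∏ γ ∈ G.erase γ₀, (X - Polynomial.C γ) with hP
  have hPne : P.eval γ₀ ≠ 0 := by
    rw [hP, eval_prod]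
    refine Finset.prod_ne_zero_iff.2 fun γ hγ => ?_
    have : γ ≠ γ₀ := (Finset.mem_erase.1 hγ).1
    simpa [sub_eq_zero] using fun h => this h.symm
  set N := P.natDegree + 1 with hN
  have key : ∀ e : ℕ,
      (∑ m ∈ Finset.range N, P.coeff m * ∑ γ ∈ G, c γ * γ ^ (e + m))
        = c γ₀ * γ₀ ^ e * P.eval γ₀ := by
    intro e
    have step : (∑ m ∈ Finset.range N, P.coeff m * ∑ γ ∈ G, c γ * γ ^ (e + m))
        = ∑ γ ∈ G, c γ * γ ^ e * P.eval γ := by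
      simp_rw [Finset.mul_sum]
      rw [Finset.sum_comm]
      refine Finset.sum_congr rfl fun γ _ => ?_
      rw [eval_eq_sum_range, Finset.mul_sum]
      refine Finset.sum_congr rfl fun m _ => ?_
      rw [pow_add]; ring
    rw [step]
    refine Finset.sum_eq_single γ₀ (fun γ hγ hne => ?_) (fun h => absurd hγ₀ h)
    have : P.eval γ = 0 := by
      rw [hP, eval_prod]
      exact Finset.prod_eq_zero (Finset.mem_erase.2 ⟨hne, hγ⟩) (by simp)
    rw [this, mul_zero]
  -- bound
  set K₂ : ℝ := ∑ m ∈ Finset.range N, ‖P.coeff m‖ * (K * M ^ m) with hK₂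
  have hbound2 : ∀ e : ℕ, 1 ≤ e →
      ‖c γ₀ * P.eval γ₀‖ * ‖γ₀‖ ^ e ≤ K₂ * M ^ e := by
    intro e he
    have := key e
    calc ‖c γ₀ * P.eval γ₀‖ * ‖γ₀‖ ^ e
        = ‖∑ m ∈ Finset.range N, P.coeff m * ∑ γ ∈ G, c γ * γ ^ (e + m)‖ := by
          rw [this]; simp only [norm_mul, norm_pow]; ring
      _ ≤ ∑ m ∈ Finset.range N, ‖P.coeff m * ∑ γ ∈ G, c γ * γ ^ (e + m)‖ :=
          norm_sum_le _ _
      _ ≤ ∑ m ∈ Finset.range N, ‖P.coeff m‖ * (K * M ^ (e + m)) := by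
          refine Finset.sum_le_sum fun m _ => ?_
          rw [norm_mul]
          exact mul_le_mul_of_nonneg_left (hb (e + m) (le_add_right he)) (by positivity)
      _ = K₂ * M ^ e := by
          rw [hK₂, Finset.sum_mul]
          refine Finset.sum_congr rfl fun m _ => ?_
          rw [pow_add]; ring
  set D : ℝ := ‖c γ₀ * P.eval γ₀‖ with hD
  have hDpos : 0 < D := by
    rw [hD]
    exact norm_pos_iff.2 (mul_ne_zero (hc γ₀ hγ₀) hPne)
  have hr : 1 < ‖γ₀‖ / M := (one_lt_div hM).2 hlt
  obtain ⟨n, hn⟩ := pow_unbounded_of_one_lt (K₂ / D) hr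
  have h1 : D * ‖γ₀‖ ^ (n+1) ≤ K₂ * M ^ (n+1) := hbound2 (n+1) (by omega)
  have h2 : (‖γ₀‖ / M) ^ (n+1) ≤ K₂ / D := by
    rw [div_pow, div_le_div_iff₀ (by positivity) hDpos]
    nlinarith
  have h3 : (‖γ₀‖ / M) ^ n ≤ (‖γ₀‖ / M) ^ (n+1) :=
    pow_le_pow_right₀ (le_of_lt hr) (by omega)
  linarith

theorem stmt_10 (d₁ d₂ : ℕ) (α : Fin d₁ → ℂ) (β : Fin d₂ → ℂ)
    (C B : ℝ) (hB : 0 < B)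
    (hbound : ∀ e : ℕ, 1 ≤ e →
      ‖∑ j, β j ^ e - ∑ i, α i ^ e‖ ≤ C * B ^ e)
    (hlowest : ∀ i j, α i ≠ β j) :
    (∀ i, ‖α i‖ ≤ B) ∧ (∀ j, ‖β j‖ ≤ B) := by
  classical
  set Gβ := Finset.univ.image β with hGβ
  set Gα := Finset.univ.image α with hGα
  set G := Gβ ∪ Gα with hG
  set cβ : ℂ → ℕ := fun γ => (Finset.univ.filter fun j => β j = γ).card with hcβ
  set cα : ℂ → ℕ := fun γ => (Finset.univ.filter fun i => α i = γ).card with hcα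
  set c : ℂ → ℂ := fun γ => (cβ γ : ℂ) - (cα γ : ℂ) with hc
  have hβ0 : ∀ γ, γ ∉ Gβ → cβ γ = 0 := by
    intro γ hγ
    rw [hcβ]
    simp only [Finset.card_eq_zero, Finset.filter_eq_empty_iff]
    intro j _ h
    exact hγ (by rw [hGβ]; exact Finset.mem_image.2 ⟨j, Finset.mem_univ j, h ▸ rfl⟩)
  have hα0 : ∀ γ, γ ∉ Gα → cα γ = 0 := by
    intro γ hγ
    rw [hcα]
    simp only [Finset.card_eq_zero, Finset.filter_eq_empty_iff]
    intro i _ h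
    exact hγ (by rw [hGα]; exact Finset.mem_image.2 ⟨i, Finset.mem_univ i, h ▸ rfl⟩)
  have hsum : ∀ e : ℕ, (∑ j, β j ^ e - ∑ i, α i ^ e) = ∑ γ ∈ G, c γ * γ ^ e := by
    intro e
    have h1 : (∑ j, β j ^ e) = ∑ γ ∈ G, (cβ γ : ℂ) * γ ^ e := by
      rw [Finset.sum_comp (fun x : ℂ => x ^ e) β]
      rw [Finset.sum_subset (Finset.subset_union_left : Gβ ⊆ G)]
      · exact Finset.sum_congr rfl fun γ _ => by rw [nsmul_eq_mul]
      · intro γ _ hγ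
        rw [show (Finset.univ.filter fun j => β j = γ).card = cβ γ from rfl, hβ0 γ hγ]
        simp
    have h2 : (∑ i, α i ^ e) = ∑ γ ∈ G, (cα γ : ℂ) * γ ^ e := by
      rw [Finset.sum_comp (fun x : ℂ => x ^ e) α]
      rw [Finset.sum_subset (Finset.subset_union_right : Gα ⊆ G)]
      · exact Finset.sum_congr rfl fun γ _ => by rw [nsmul_eq_mul]
      · intro γ _ hγ
        rw [show (Finset.univ.filter fun i => α i = γ).card = cα γ from rfl, hα0 γ hγ]
        simp
    rw [h1, h2, ← Finset.sum_sub_distrib]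
    exact Finset.sum_congr rfl fun γ _ => by rw [hc]; ring
  have hcne : ∀ γ ∈ G, c γ ≠ 0 := by
    intro γ hγ
    rw [hG, Finset.mem_union] at hγ
    rcases hγ with hγ | hγ
    · obtain ⟨j, _, hj⟩ := Finset.mem_image.1 hγ
      have hα : cα γ = 0 := by
        rw [hcα]
        simp only [Finset.card_eq_zero, Finset.filter_eq_empty_iff]
        intro i _ h
        exact hlowest i j (h.trans hj.symm)
      have hβpos : 0 < cβ γ := Finset.card_pos.2 ⟨j, Finset.mem_filter.2 ⟨Finset.mem_univ j, hj⟩⟩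
      rw [hc]; simp only [hα, Nat.cast_zero, sub_zero]
      exact_mod_cast hβpos.ne'
    · obtain ⟨i, _, hi⟩ := Finset.mem_image.1 hγ
      have hβz : cβ γ = 0 := by
        rw [hcβ]
        simp only [Finset.card_eq_zero, Finset.filter_eq_empty_iff]
        intro j _ h
        exact hlowest i j (hi.trans h.symm)
      have hαpos : 0 < cα γ := Finset.card_pos.2 ⟨i, Finset.mem_filter.2 ⟨Finset.mem_univ i, hi⟩⟩
      rw [hc]; simp only [hβz, Nat.cast_zero, zero_sub, neg_ne_zero]
      exact_mod_cast hαpos.ne'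
  have hmain : ∀ γ ∈ G, ‖γ‖ ≤ B := by
    refine aux_key G c hcne C B hB fun e he => ?_
    rw [← hsum e]
    exact hbound e he
  constructor
  · intro i
    exact hmain (α i) (Finset.mem_union.2 (Or.inr (Finset.mem_image.2 ⟨i, Finset.mem_univ i, rfl⟩)))
  · intro j
    exact hmain (β j) (Finset.mem_union.2 (Or.inl (Finset.mem_image.2 ⟨j, Finset.mem_univ j, rfl⟩)))
end

section
/- Let q be a prime, k, h positive integers with k ≤ h < q, and let y ∈ {0,1}^q have Hamming weight h. For each binary vector x ∈ {0,1}^q of Hamming weight h with H_q(k) x ≡ H_q(k) y (mod q), define f_x(t) = ∏_{i : x_i = 1} (t − a_i) ∈ 𝔽_q[t]. Then f_y(t) − f_x(t) is a polynomial of degree at most h − k; in particular its evaluation vector on 𝔽_q is a codeword of the Reed–Solomon code RS_q(h−k+1), and this codeword agrees with the evaluation vector of f_y at all h roots of f_x, so their Hamming distance is at most q − h. -/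
open Polynomial Finset

lemma newton_eval {R : Type*} [CommRing R] {ι : Type*} (S : Finset ι) (a : ι → R)
    (j : ℕ) (hj : 0 < j) :
    (∑ i ∈ S, a i ^ j) = (-1) ^ (j + 1) * (j : R) * (S.val.map a).esymm j -
      ∑ p ∈ (Finset.HasAntidiagonal.antidiagonal j).filter (fun p => p.1 ∈ Set.Ioo 0 j),
        (-1) ^ p.1 * (S.val.map a).esymm p.1 * (∑ i ∈ S, a i ^ p.2) := by
  classical
  have key := congrArg (MvPolynomial.aeval (fun i : {x // x ∈ S} => a i))
    (MvPolynomial.psum_eq_mul_esymm_sub_sum {x // x ∈ S} R j hj)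
  have hesymm : ∀ n, MvPolynomial.aeval (fun i : {x // x ∈ S} => a i)
      (MvPolynomial.esymm {x // x ∈ S} R n) = (S.val.map a).esymm n := by
    intro n
    rw [MvPolynomial.aeval_esymm_eq_multiset_esymm]
    congr 1
    rw [Finset.univ_eq_attach, Finset.attach_val]
    exact Multiset.attach_map_val' S.val a
  have hpsum : ∀ n, MvPolynomial.aeval (fun i : {x // x ∈ S} => a i)
      (MvPolynomial.psum {x // x ∈ S} R n) = ∑ i ∈ S, a i ^ n := by
    intro n
    rw [MvPolynomial.psum]
    simp only [map_sum, map_pow, MvPolynomial.aeval_X]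
    exact Finset.sum_coe_sort S (fun i => a i ^ n)
  simpa only [map_sub, map_mul, map_sum, map_pow, map_neg, map_one, map_natCast,
    hesymm, hpsum] using key

lemma esymm_eq_of_psum_eq {q : ℕ} [Fact q.Prime] {ι : Type*} (S T : Finset ι)
    (a : ι → ZMod q) (K : ℕ) (hKq : K < q)
    (hsyn : ∀ j : ℕ, j ≤ K → ∑ i ∈ S, a i ^ j = ∑ i ∈ T, a i ^ j) :
    ∀ j : ℕ, j ≤ K → (S.val.map a).esymm j = (T.val.map a).esymm j := by
  intro j
  induction j using Nat.strong_induction_on with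
  | _ j ih =>
    intro hjK
    rcases Nat.eq_zero_or_pos j with h0 | hpos
    · subst h0; simp [Multiset.esymm]
    · have h1 := newton_eval S a j hpos
      have h2 := newton_eval T a j hpos
      have hsum : ∑ p ∈ (Finset.HasAntidiagonal.antidiagonal j).filter (fun p => p.1 ∈ Set.Ioo 0 j),
            (-1 : ZMod q) ^ p.1 * (S.val.map a).esymm p.1 * (∑ i ∈ S, a i ^ p.2)
          = ∑ p ∈ (Finset.HasAntidiagonal.antidiagonal j).filter (fun p => p.1 ∈ Set.Ioo 0 j),
            (-1 : ZMod q) ^ p.1 * (T.val.map a).esymm p.1 * (∑ i ∈ T, a i ^ p.2) := by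
        refine Finset.sum_congr rfl ?_
        intro p hp
        simp only [Finset.mem_filter, Finset.HasAntidiagonal.mem_antidiagonal, Set.mem_Ioo] at hp
        obtain ⟨hpj, hp0, hplt⟩ := hp
        rw [ih p.1 hplt (le_trans hplt.le hjK), hsyn p.2 (by omega)]
      have hmul : (-1 : ZMod q) ^ (j + 1) * (j : ZMod q) * (S.val.map a).esymm j
          = (-1) ^ (j + 1) * (j : ZMod q) * (T.val.map a).esymm j := by
        have := hsyn j hjK
        rw [h1, h2, hsum] at this
        exact sub_left_inj.mp this
      have hj0 : ((j : ℕ) : ZMod q) ≠ 0 := by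
        intro h0
        rw [ZMod.natCast_eq_zero_iff] at h0
        have hd := h0
        have := Nat.le_of_dvd hpos hd
        omega
      have hne : ((-1 : ZMod q) ^ (j + 1) * (j : ZMod q)) ≠ 0 :=
        mul_ne_zero (pow_ne_zero _ (neg_ne_zero.mpr one_ne_zero)) hj0
      exact mul_left_cancel₀ hne hmul

theorem stmt_16 (q k h : ℕ) [Fact q.Prime] (hk : 1 ≤ k) (hkh : k ≤ h) (hhq : h < q)
    (a : Fin q → ZMod q) (ha : Function.Bijective a)
    (S T : Finset (Fin q)) (hScard : S.card = h) (hTcard : T.card = h)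
    (hsyn : ∀ j : ℕ, j ≤ k - 1 → ∑ i ∈ S, a i ^ j = ∑ i ∈ T, a i ^ j)
    (fx fy : Polynomial (ZMod q))
    (hfx : fx = ∏ i ∈ S, (X - C (a i)))
    (hfy : fy = ∏ i ∈ T, (X - C (a i))) :
    (fy - fx).degree ≤ ((h - k : ℕ) : WithBot ℕ) ∧
    (fun i : Fin q => (fy - fx).eval (a i)) ∈
      {w : Fin q → ZMod q | ∃ g : Polynomial (ZMod q),
        g.degree < ((h - k + 1 : ℕ) : WithBot ℕ) ∧ ∀ i, w i = g.eval (a i)} ∧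
    (∀ i ∈ S, (fy - fx).eval (a i) = fy.eval (a i)) ∧
    (Finset.univ.filter fun i : Fin q =>
      (fy - fx).eval (a i) ≠ fy.eval (a i)).card ≤ q - h := by
  have hesymm := esymm_eq_of_psum_eq S T a (k - 1) (by omega) hsyn
  have hfxm : fx = ((S.val.map a).map (fun t => X - C t)).prod := by
    rw [hfx, Finset.prod, Multiset.map_map]; rfl
  have hfym : fy = ((T.val.map a).map (fun t => X - C t)).prod := by
    rw [hfy, Finset.prod, Multiset.map_map]; rfl
  have hScardm : Multiset.card (S.val.map a) = h := by simp [hScard]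
  have hTcardm : Multiset.card (T.val.map a) = h := by simp [hTcard]
  have hfxdeg : fx.natDegree = h := by
    rw [hfx, natDegree_prod_of_monic _ _ (fun i _ => monic_X_sub_C _)]
    simp [hScard]
  have hfydeg : fy.natDegree = h := by
    rw [hfy, natDegree_prod_of_monic _ _ (fun i _ => monic_X_sub_C _)]
    simp [hTcard]
  have hcoeff : ∀ m : ℕ, h - k < m → (fy - fx).coeff m = 0 := by
    intro m hm
    rw [coeff_sub, sub_eq_zero]
    by_cases hmh : m ≤ h
    · rw [hfxm, hfym, Multiset.prod_X_sub_C_coeff _ (by omega),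
        Multiset.prod_X_sub_C_coeff _ (by omega), hScardm, hTcardm,
        hesymm (h - m) (by omega)]
    · rw [coeff_eq_zero_of_natDegree_lt (by omega),
        coeff_eq_zero_of_natDegree_lt (by omega)]
  have hdeg : (fy - fx).degree ≤ ((h - k : ℕ) : WithBot ℕ) := by
    rw [degree_le_iff_coeff_zero]
    intro m hm
    exact hcoeff m (by exact_mod_cast hm)
  have hevalS : ∀ i ∈ S, (fy - fx).eval (a i) = fy.eval (a i) := by
    intro i hi
    have : fx.eval (a i) = 0 := by
      rw [hfx, eval_prod]
      exact Finset.prod_eq_zero hi (by simp)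
    rw [eval_sub, this, sub_zero]
  refine ⟨hdeg, ⟨fy - fx, lt_of_le_of_lt hdeg (by exact_mod_cast Nat.lt_succ_self (h - k)),
    fun i => rfl⟩, hevalS, ?_⟩
  have hsub : (Finset.univ.filter fun i : Fin q =>
      (fy - fx).eval (a i) ≠ fy.eval (a i)) ⊆ Sᶜ := by
    intro i hi
    simp only [Finset.mem_filter, Finset.mem_compl] at hi ⊢
    intro hiS
    exact hi.2 (hevalS i hiS)
  calc (Finset.univ.filter fun i : Fin q =>
      (fy - fx).eval (a i) ≠ fy.eval (a i)).card
      ≤ Sᶜ.card := Finset.card_le_card hsub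
    _ = q - h := by rw [Finset.card_compl, hScard, Fintype.card_fin]
end

section
/- Let q be a prime and 2 ≤ k ≤ h < q. If a point (x_1, …, x_h) ∈ 𝔽̄_q^h (over an algebraic closure) has at most k−2 distinct coordinate values, with at least one nonzero coordinate, and satisfies ∑_{i=1}^h x_i^j = 0 for all 1 ≤ j ≤ k−1, then a contradiction arises; i.e., no such point exists provided h < q. -/
open scoped Classical

set_option maxHeartbeats 1000000 in
theorem stmt_19 (q k h : ℕ) [Fact q.Prime] (hk : 2 ≤ k) (hkh : k ≤ h) (hhq : h < q)
    (x : Fin h → AlgebraicClosure (ZMod q))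
    (hdist : (Finset.univ.image x).card ≤ k - 2)
    (hnz : ∃ i, x i ≠ 0)
    (hsol : ∀ j : ℕ, 1 ≤ j → j ≤ k - 1 → ∑ i, x i ^ j = 0) :
    False := by
  haveI : CharP (AlgebraicClosure (ZMod q)) q :=
    charP_of_injective_algebraMap (algebraMap (ZMod q) (AlgebraicClosure (ZMod q))).injective q
  classical
  let T : Finset (AlgebraicClosure (ZMod q)) := (Finset.univ.image x).filter (· ≠ 0)
  let m : AlgebraicClosure (ZMod q) → ℕ := fun z => (Finset.univ.filter fun i => x i = z).card
  have hTsub : T ⊆ Finset.univ.image x := Finset.filter_subset _ _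
  have key : ∀ j : ℕ, 1 ≤ j → j ≤ k - 1 →
      ∑ z ∈ T, (m z : AlgebraicClosure (ZMod q)) * z ^ j = 0 := by
    intro j hj1 hjk
    have h1 : ∑ i, x i ^ j = ∑ z ∈ Finset.univ.image x,
        (m z : AlgebraicClosure (ZMod q)) * z ^ j := by
      rw [Finset.sum_comp (fun z : AlgebraicClosure (ZMod q) => z ^ j) x]
      simp [m, nsmul_eq_mul]
    have h2 : ∑ z ∈ T, (m z : AlgebraicClosure (ZMod q)) * z ^ j
        = ∑ z ∈ Finset.univ.image x, (m z : AlgebraicClosure (ZMod q)) * z ^ j := by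
      refine Finset.sum_subset hTsub ?_
      intro z hz hzT
      have hz0 : z = 0 := by
        by_contra hz0
        exact hzT (Finset.mem_filter.2 ⟨hz, hz0⟩)
      simp [hz0, zero_pow (by omega : j ≠ 0)]
    rw [h2, ← h1]
    exact hsol j hj1 hjk
  have heb : T.card ≤ k - 2 := le_trans (Finset.card_le_card hTsub) hdist
  let z : Fin T.card → AlgebraicClosure (ZMod q) := fun i => (T.equivFin.symm i : _)
  have hzmem : ∀ i, z i ∈ T := fun i => (T.equivFin.symm i).2
  have hzinj : Function.Injective z := fun a b hab =>
    T.equivFin.symm.injective (Subtype.ext hab)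
  have hzne : ∀ i, z i ≠ 0 := fun i => (Finset.mem_filter.1 (hzmem i)).2
  let A : Matrix (Fin T.card) (Fin T.card) (AlgebraicClosure (ZMod q)) :=
    Matrix.of fun j i => z i ^ ((j : ℕ) + 1)
  have hmul : A.mulVec (fun i => (m (z i) : AlgebraicClosure (ZMod q))) = 0 := by
    funext j
    have hsum : ∑ w ∈ T, (m w : AlgebraicClosure (ZMod q)) * w ^ ((j : ℕ) + 1) = 0 := by
      refine key _ (by omega) ?_
      have hje : (j : ℕ) < T.card := j.2
      omega
    have step1 : A.mulVec (fun i => (m (z i) : AlgebraicClosure (ZMod q))) j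
        = ∑ i, (m (z i) : AlgebraicClosure (ZMod q)) * z i ^ ((j : ℕ) + 1) := by
      simp [A, Matrix.mulVec, dotProduct, mul_comm]
    have step2 : ∑ i, (m (z i) : AlgebraicClosure (ZMod q)) * z i ^ ((j : ℕ) + 1)
        = ∑ w ∈ T, (m w : AlgebraicClosure (ZMod q)) * w ^ ((j : ℕ) + 1) := by
      rw [← Finset.sum_coe_sort T (fun w => (m w : AlgebraicClosure (ZMod q)) * w ^ ((j : ℕ) + 1))]
      exact Equiv.sum_comp T.equivFin.symm
        (fun w => (m (w : AlgebraicClosure (ZMod q)) : AlgebraicClosure (ZMod q))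
          * (w : AlgebraicClosure (ZMod q)) ^ ((j : ℕ) + 1))
    rw [step1, step2, hsum]
    rfl
  have hdet : A.det ≠ 0 := by
    have hAt : A = (Matrix.of fun i j : Fin T.card =>
        z i * (Matrix.vandermonde z) i j).transpose := by
      ext j i
      simp [A, Matrix.vandermonde, pow_succ, mul_comm]
    rw [hAt, Matrix.det_transpose, Matrix.det_mul_column]
    refine mul_ne_zero (Finset.prod_ne_zero_iff.2 fun i _ => hzne i) ?_
    rw [Matrix.det_vandermonde_ne_zero_iff]
    exact hzinj
  have hinj := Matrix.mulVec_injective_iff_isUnit.2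
    ((Matrix.isUnit_iff_isUnit_det A).2 (Ne.isUnit hdet))
  have hzero : (fun i => (m (z i) : AlgebraicClosure (ZMod q))) = 0 := by
    apply hinj
    rw [hmul, Matrix.mulVec_zero]
  obtain ⟨i0, hi0⟩ := hnz
  have hTne : T.Nonempty :=
    ⟨x i0, Finset.mem_filter.2 ⟨Finset.mem_image_of_mem x (Finset.mem_univ i0), hi0⟩⟩
  have hepos : 0 < T.card := Finset.card_pos.2 hTne
  let i : Fin T.card := ⟨0, hepos⟩
  have h1 : (m (z i) : AlgebraicClosure (ZMod q)) = 0 := congrFun hzero i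
  have hmle : m (z i) ≤ h := by
    simpa using Finset.card_le_card (Finset.filter_subset (fun a => x a = z i) Finset.univ)
  have hmpos : 0 < m (z i) := by
    have hmm := hzmem i
    rw [Finset.mem_filter, Finset.mem_image] at hmm
    obtain ⟨⟨a, _, ha⟩, _⟩ := hmm
    exact Finset.card_pos.2 ⟨a, Finset.mem_filter.2 ⟨Finset.mem_univ a, ha⟩⟩
  have hdvd := (CharP.cast_eq_zero_iff (AlgebraicClosure (ZMod q)) q (m (z i))).1 h1
  have := Nat.le_of_dvd hmpos hdvd
  omega
end
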